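/- Agmon distance to a local minimum along the gradient flow: let f be C^1 on an open set Ω ⊆ ℝ^d, x* ∈ Ω a critical point of f, and x a point whose backward gradient flow trajectory γ' = −∇f(γ), γ(0) = x converges to x* as t → ∞ while staying in Ω. Then d_a(x*, x) = f(x) − f(x*), where d_a is the Agmon distance with weight |∇f| (defined as an infimum over Lipschitz curves, allowing curves parametrized on unbounded intervals with convergent endpoints). -/

import Mathlib

open MeasureTheory Filter Topology
open scoped ENNReal
open Set
open scoped NNReal

lemma lipschitzOnWith_Icc_of_locally {u : ℝ → ℝ} {L : NNReal} {a b : ℝ}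
    (hcont : ContinuousOn u (Set.Icc a b)) {r : ℝ} (hr : 0 < r)
    (hloc : ∀ t ∈ Set.Icc a b, ∀ p ∈ Set.Icc a b, ∀ q ∈ Set.Icc a b,
      |p - t| < r → |q - t| < r → |u p - u q| ≤ L * |p - q|) :
    LipschitzOnWith L u (Set.Icc a b) := by
  rw [lipschitzOnWith_iff_dist_le_mul]
  have key : ∀ s ∈ Set.Icc a b, ∀ t ∈ Set.Icc a b, s ≤ t → |u t - u s| ≤ L * (t - s) := by
    intro s hs t ht hst
    set S : Set ℝ := {t | |u t - u s| ≤ L * (t - s)} with hSdef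
    have hSc : IsClosed (S ∩ Set.Icc s b) := by
      have hc : ContinuousOn (fun t => (|u t - u s|, (L : ℝ) * (t - s))) (Set.Icc s b) := by
        refine ContinuousOn.prodMk ?_ ?_
        · exact ((hcont.mono (Set.Icc_subset_Icc_left hs.1)).sub continuousOn_const).abs
        · exact continuousOn_const.mul (continuousOn_id.sub continuousOn_const)
      have : S ∩ Set.Icc s b
          = Set.Icc s b ∩ (fun t => (|u t - u s|, (L : ℝ) * (t - s))) ⁻¹' {p : ℝ × ℝ | p.1 ≤ p.2} := by
        ext y; simp [hSdef, and_comm]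
      rw [this]
      exact hc.preimage_isClosed_of_isClosed isClosed_Icc
        (isClosed_le continuous_fst continuous_snd)
    have main : Set.Icc s b ⊆ S := by
      apply hSc.Icc_subset_of_forall_exists_gt
      · simp [hSdef]
      · rintro x ⟨hxS, hxs, hxb⟩ y hy
        set z := min (min y b) (x + r / 2) with hz
        have hxz : x < z := by
          apply lt_min (lt_min hy hxb)
          linarith
        have hzb : z ≤ b := le_trans (min_le_left _ _) (min_le_right _ _)
        have hzy : z ≤ y := le_trans (min_le_left _ _) (min_le_left _ _)
        have hzr : z - x < r := by
          have : z ≤ x + r / 2 := min_le_right _ _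
          linarith
        have hxab : x ∈ Set.Icc a b := ⟨le_trans hs.1 hxs, hxb.le⟩
        have hzab : z ∈ Set.Icc a b := ⟨le_trans hxab.1 hxz.le, hzb⟩
        refine ⟨z, ?_, ⟨hxz, hzy⟩⟩
        have h1 : |u z - u x| ≤ L * |z - x| := by
          refine hloc x hxab z hzab x hxab ?_ ?_
          · rw [abs_of_nonneg (by linarith)]; exact hzr
          · simpa using hr
        have h2 : |u z - u s| ≤ |u z - u x| + |u x - u s| := by
          have := abs_sub_le (u z) (u x) (u s); linarith [abs_sub_le (u z) (u x) (u s)]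
        have hxS' : |u x - u s| ≤ L * (x - s) := hxS
        have : |u z - u s| ≤ L * (z - x) + L * (x - s) := by
          rw [abs_of_nonneg (by linarith : (0:ℝ) ≤ z - x)] at h1
          linarith
        show |u z - u s| ≤ L * (z - s)
        calc |u z - u s| ≤ L * (z - x) + L * (x - s) := this
          _ = L * (z - s) := by ring
    exact main ⟨hst, ht.2⟩
  intro p hp q hq
  rw [Real.dist_eq, Real.dist_eq]
  rcases le_total p q with h | h
  · rw [abs_sub_comm (u p) (u q), abs_sub_comm p q, abs_of_nonneg (sub_nonneg.2 h)]
    exact key p hp q hq h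
  · rw [abs_of_nonneg (sub_nonneg.2 h)]
    exact key q hq p hp h

lemma lintegral_deriv_of_monotone_lipschitz {h : ℝ → ℝ} {K : NNReal}
    (hm : Monotone h) (hl : LipschitzWith K h) {a b : ℝ} (hab : a ≤ b) :
    ∫⁻ t in Set.Ioc a b, ENNReal.ofReal (deriv h t) = ENNReal.ofReal (h b - h a) := by
  set μ := hm.stieltjesFunction.measure with hμdef
  have hcont : Continuous h := hl.continuous
  have heq : ∀ x, hm.stieltjesFunction x = h x := by
    intro x
    rw [hm.stieltjesFunction_eq]
    exact rightLim_eq_of_tendsto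
      (hcont.continuousAt.continuousWithinAt.tendsto)
  -- the complementary monotone function
  have hm2 : Monotone (fun t : ℝ => (K : ℝ) * t - h t) := by
    intro s t hst
    have := hl.dist_le_mul s t
    rw [Real.dist_eq, Real.dist_eq] at this
    have h1 : h t - h s ≤ K * |s - t| := by
      calc h t - h s ≤ |h s - h t| := by rw [abs_sub_comm]; exact le_abs_self _
        _ ≤ K * |s - t| := this
    rw [abs_of_nonpos (by linarith : s - t ≤ 0)] at h1
    simp only
    linarith
  have hsum : hm.stieltjesFunction + hm2.stieltjesFunction = K • StieltjesFunction.id := by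
    ext x
    have h2 : hm2.stieltjesFunction x = (K : ℝ) * x - h x := by
      rw [hm2.stieltjesFunction_eq]
      refine rightLim_eq_of_tendsto ?_
      exact (((continuous_const.mul continuous_id).sub hcont).continuousAt).continuousWithinAt.tendsto
    rw [StieltjesFunction.add_apply, heq x, h2]
    show h x + ((K : ℝ) * x - h x) = (K : ℝ) * x
    ring
  have hμsum : μ + hm2.stieltjesFunction.measure = (K : ℝ≥0) • volume := by
    rw [hμdef, ← StieltjesFunction.measure_add, hsum, StieltjesFunction.measure_smul,
      Real.volume_eq_stieltjes_id]
  have hle : μ ≤ (K : ℝ≥0) • volume := by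
    rw [← hμsum]
    exact Measure.le_add_right le_rfl
  have hac : μ ≪ volume := Measure.absolutelyContinuous_of_le_smul hle
  have hrn : volume.withDensity (μ.rnDeriv volume) = μ :=
    Measure.withDensity_rnDeriv_eq μ volume hac
  have hμIoc : μ (Set.Ioc a b) = ENNReal.ofReal (h b - h a) := by
    rw [hμdef, StieltjesFunction.measure_Ioc, heq, heq]
  rw [← hμIoc, ← hrn, withDensity_apply _ measurableSet_Ioc]
  refine lintegral_congr_ae (ae_restrict_of_ae ?_)
  filter_upwards [hm.ae_hasDerivAt, Measure.rnDeriv_lt_top μ volume] with t ht hlt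
  rw [ht.deriv, ENNReal.ofReal_toReal hlt.ne]



lemma ofReal_sub_le_lintegral_abs_deriv' {g : ℝ → ℝ} {K : NNReal} (hg : LipschitzWith K g)
    {a b : ℝ} (hab : a ≤ b) :
    ENNReal.ofReal (g a - g b) ≤ ∫⁻ t in Set.Ioc a b, ENNReal.ofReal |deriv g t| := by
  rcases le_or_gt (g a - g b) 0 with hba | hba
  · rw [ENNReal.ofReal_eq_zero.2 hba]; exact zero_le
  set h : ℝ → ℝ := fun t => (K : ℝ) * t - g t with hh
  have hmono : Monotone h := by
    intro s t hst
    have h0 := hg.dist_le_mul s t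
    rw [Real.dist_eq, Real.dist_eq] at h0
    have h1 : g t - g s ≤ K * |s - t| := by
      refine le_trans (le_abs_self _) ?_
      rwa [abs_sub_comm] at h0
    rw [abs_of_nonpos (by linarith : s - t ≤ 0)] at h1
    simp only [hh]
    linarith
  have hKlip : LipschitzWith K (fun t : ℝ => (K : ℝ) * t) := by
    apply LipschitzWith.of_dist_le_mul
    intro s t
    rw [Real.dist_eq, Real.dist_eq, ← mul_sub, abs_mul, abs_of_nonneg K.coe_nonneg]
  have hlip : LipschitzWith (K + K) h := hKlip.sub hg
  have hder : ∀ᵐ t, deriv h t = (K : ℝ) - deriv g t := by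
    filter_upwards [hg.ae_differentiableAt_real] with t ht
    have h1 : HasDerivAt (fun s : ℝ => (K : ℝ) * s) (K : ℝ) t := by
      simpa using (hasDerivAt_id t).const_mul (K : ℝ)
    exact (h1.sub ht.hasDerivAt).deriv
  have h2 := lintegral_deriv_of_monotone_lipschitz hmono hlip (a := a) (b := b) hab
  have hval : ENNReal.ofReal (h b - h a)
      = ENNReal.ofReal ((K : ℝ) * (b - a)) + ENNReal.ofReal (g a - g b) := by
    rw [← ENNReal.ofReal_add (mul_nonneg K.coe_nonneg (by linarith)) hba.le]
    congr 1
    simp only [hh]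
    ring
  have h3 : ∫⁻ t in Set.Ioc a b, ENNReal.ofReal (deriv h t)
      ≤ ∫⁻ t in Set.Ioc a b, (ENNReal.ofReal ((K : ℝ)) + ENNReal.ofReal |deriv g t|) := by
    refine lintegral_mono_ae (ae_restrict_of_ae ?_)
    filter_upwards [hder] with t ht
    rw [ht, ← ENNReal.ofReal_add K.coe_nonneg (abs_nonneg _)]
    exact ENNReal.ofReal_le_ofReal (by linarith [neg_abs_le (deriv g t), le_abs_self (deriv g t)])
  rw [lintegral_add_left measurable_const, setLIntegral_const, Real.volume_Ioc] at h3
  have hKvol : ENNReal.ofReal ((K : ℝ)) * ENNReal.ofReal (b - a)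
      = ENNReal.ofReal ((K : ℝ) * (b - a)) := (ENNReal.ofReal_mul K.coe_nonneg).symm
  rw [hKvol] at h3
  rw [h2, hval] at h3
  exact (ENNReal.add_le_add_iff_left ENNReal.ofReal_ne_top).1 h3

lemma ofReal_sub_le_lintegral_abs_deriv {u : ℝ → ℝ} {K : NNReal} {a b : ℝ} (hab : a ≤ b)
    (hu : LipschitzOnWith K u (Set.Icc a b)) :
    ENNReal.ofReal (u a - u b) ≤ ∫⁻ t in Set.Ioc a b, ENNReal.ofReal |deriv u t| := by
  obtain ⟨g, hg, hgu⟩ := hu.extend_real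
  have hga : g a = u a := (hgu (Set.left_mem_Icc.2 hab)).symm
  have hgb : g b = u b := (hgu (Set.right_mem_Icc.2 hab)).symm
  have h1 : ENNReal.ofReal (u a - u b) ≤ ∫⁻ t in Set.Ioc a b, ENNReal.ofReal |deriv g t| := by
    rw [← hga, ← hgb]
    exact ofReal_sub_le_lintegral_abs_deriv' hg hab
  refine le_trans h1 (le_of_eq ?_)
  rw [← setLIntegral_congr Ioo_ae_eq_Ioc, ← setLIntegral_congr Ioo_ae_eq_Ioc]
  refine setLIntegral_congr_fun measurableSet_Ioo (fun t ht => ?_)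
  have : deriv g t = deriv u t := by
    apply Filter.EventuallyEq.deriv_eq
    filter_upwards [Icc_mem_nhds ht.1 ht.2] with y hy
    exact (hgu hy).symm
  rw [this]

section GradientHelpers

variable {E : Type*} [NormedAddCommGroup E] [InnerProductSpace ℝ E] [CompleteSpace E]

lemma fderiv_apply_eq_inner_gradient (f : E → ℝ) (z v : E) :
    fderiv ℝ f z v = inner ℝ (gradient f z) v := by
  have h : (InnerProductSpace.toDual ℝ E) (gradient f z) = fderiv ℝ f z :=
    (InnerProductSpace.toDual ℝ E).apply_symm_apply _
  rw [← h, InnerProductSpace.toDual_apply_apply]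

lemma norm_gradient_eq (f : E → ℝ) (z : E) : ‖gradient f z‖ = ‖fderiv ℝ f z‖ :=
  LinearIsometryEquiv.norm_map _ _

end GradientHelpers

lemma lower_core {d : ℕ} (Ω : Set (EuclideanSpace ℝ (Fin d))) (hΩ : IsOpen Ω)
    (f : EuclideanSpace ℝ (Fin d) → ℝ) (hf : ContDiffOn ℝ 1 f Ω)
    (σ : ℝ → EuclideanSpace ℝ (Fin d)) (C : NNReal)
    (hlip : LipschitzOnWith C σ (Set.Ici 0)) (hσΩ : ∀ t, 0 ≤ t → σ t ∈ Ω)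
    {T : ℝ} (hT : 0 ≤ T) :
    ENNReal.ofReal (f (σ 0) - f (σ T)) ≤
      ∫⁻ t in Set.Ioc 0 T, ENNReal.ofReal (‖gradient f (σ t)‖ * ‖deriv σ t‖) := by
  classical
  set σ' : ℝ → EuclideanSpace ℝ (Fin d) := fun t => σ (max t 0) with hσ'def
  have hmaxlip : LipschitzWith C σ' := by
    apply LipschitzWith.of_dist_le_mul
    intro s t
    have h1 : dist (σ' s) (σ' t) ≤ C * dist (max s 0) (max t 0) :=
      lipschitzOnWith_iff_dist_le_mul.1 hlip (max s 0) (Set.mem_Ici.2 (le_max_right s 0))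
        (max t 0) (Set.mem_Ici.2 (le_max_right t 0))
    refine le_trans h1 (mul_le_mul_of_nonneg_left ?_ C.coe_nonneg)
    rw [Real.dist_eq, Real.dist_eq]
    exact abs_max_sub_max_le_abs _ _ _
  have hσ'Ω : ∀ t, σ' t ∈ Ω := fun t => hσΩ _ (le_max_right _ _)
  have hσ'cont : Continuous σ' := hmaxlip.continuous
  set Kc : Set (EuclideanSpace ℝ (Fin d)) := σ' '' (Set.Icc 0 T) with hKcdef
  have hKcpt : IsCompact Kc := isCompact_Icc.image hσ'cont
  have hKΩ : Kc ⊆ Ω := by rintro - ⟨t, -, rfl⟩; exact hσ'Ω t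
  obtain ⟨δ, hδ, hδsub⟩ := hKcpt.exists_cthickening_subset_open hΩ hKΩ
  set N := Metric.cthickening δ Kc with hNdef
  have hNcpt : IsCompact N := hKcpt.cthickening
  have hNΩ : N ⊆ Ω := hδsub
  have hfd : DifferentiableOn ℝ f Ω := hf.differentiableOn one_ne_zero
  have hfderiv_cont : ContinuousOn (fderiv ℝ f) Ω := hf.continuousOn_fderiv_of_isOpen hΩ le_rfl
  obtain ⟨M, hM⟩ := hNcpt.exists_bound_of_continuousOn (hfderiv_cont.mono hNΩ)
  set M' : ℝ := max M 0 with hM'def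
  have hM'0 : 0 ≤ M' := le_max_right _ _
  have hM' : ∀ y ∈ N, ‖fderiv ℝ f y‖ ≤ M' := fun y hy => le_trans (hM y hy) (le_max_left _ _)
  have hball : ∀ z ∈ Kc, LipschitzOnWith M'.toNNReal f (Metric.ball z δ) := by
    intro z hz
    have hsub : Metric.ball z δ ⊆ N :=
      le_trans (Metric.ball_subset_thickening hz δ) (Metric.thickening_subset_cthickening _ _)
    refine Convex.lipschitzOnWith_of_nnnorm_fderiv_le
      (fun y hy => hfd.differentiableAt (hΩ.mem_nhds (hNΩ (hsub hy)))) ?_ (convex_ball z δ)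
    intro y hy
    rw [← NNReal.coe_le_coe, coe_nnnorm, Real.coe_toNNReal _ hM'0]
    exact hM' y (hsub hy)
  -- the composed function u = f ∘ σ'
  set u : ℝ → ℝ := fun t => f (σ' t) with hudef
  have hucont : ContinuousOn u (Set.Icc 0 T) :=
    (hf.continuousOn.comp hσ'cont.continuousOn (fun t _ => hσ'Ω t))
  set L : NNReal := M'.toNNReal * C with hLdef
  have hr0 : (0:ℝ) < δ / ((C : ℝ) + 1) := by positivity
  have hulip : LipschitzOnWith L u (Set.Icc 0 T) := by
    refine lipschitzOnWith_Icc_of_locally hucont hr0 ?_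
    intro t ht p hp q hq hpt hqt
    have hmem : ∀ s : ℝ, |s - t| < δ / ((C : ℝ) + 1) → σ' s ∈ Metric.ball (σ' t) δ := by
      intro s hs
      rw [Metric.mem_ball]
      calc dist (σ' s) (σ' t) ≤ C * dist s t := hmaxlip.dist_le_mul s t
        _ ≤ (C : ℝ) * (δ / ((C : ℝ) + 1)) := by
            refine mul_le_mul_of_nonneg_left ?_ C.coe_nonneg
            rw [Real.dist_eq]; exact hs.le
        _ < δ := by
            rw [div_eq_inv_mul, ← mul_assoc]
            have hC1 : (C : ℝ) * ((C : ℝ) + 1)⁻¹ < 1 := by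
              rw [mul_inv_lt_iff₀ (by positivity)]
              linarith
            nlinarith
    have h1 := (hball (σ' t) ⟨t, ht, rfl⟩).dist_le_mul (σ' p) (hmem p hpt) (σ' q) (hmem q hqt)
    calc |u p - u q| = dist (f (σ' p)) (f (σ' q)) := (Real.dist_eq _ _).symm
      _ ≤ M'.toNNReal * dist (σ' p) (σ' q) := h1
      _ ≤ M' * ((C : ℝ) * dist p q) := by
          rw [Real.coe_toNNReal _ hM'0]
          exact mul_le_mul_of_nonneg_left (hmaxlip.dist_le_mul p q) hM'0
      _ = (L : ℝ) * |p - q| := by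
          rw [hLdef, NNReal.coe_mul, Real.coe_toNNReal _ hM'0, Real.dist_eq]
          ring
  have hkey : ENNReal.ofReal (u 0 - u T) ≤ ∫⁻ t in Set.Ioc 0 T, ENNReal.ofReal |deriv u t| :=
    ofReal_sub_le_lintegral_abs_deriv hT hulip
  have hu0 : u 0 = f (σ 0) := by simp [hudef, hσ'def]
  have huT : u T = f (σ T) := by simp [hudef, hσ'def, max_eq_left hT]
  rw [hu0, huT] at hkey
  refine le_trans hkey ?_
  refine lintegral_mono_ae ?_
  filter_upwards [ae_restrict_mem measurableSet_Ioc,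
    ae_restrict_of_ae hmaxlip.ae_differentiableAt_real] with t ht hdiff
  have ht0 : 0 < t := ht.1
  have hagree : σ' =ᶠ[nhds t] σ := by
    filter_upwards [Ioi_mem_nhds ht0] with s hs
    simp [hσ'def, max_eq_left (le_of_lt (Set.mem_Ioi.1 hs))]
  have hσ't : σ' t = σ t := by simp [hσ'def, max_eq_left ht0.le]
  have hderiv_eq : deriv σ' t = deriv σ t := hagree.deriv_eq
  have hfdiff : DifferentiableAt ℝ f (σ' t) := hfd.differentiableAt (hΩ.mem_nhds (hσ'Ω t))
  have hchain : HasDerivAt u ((fderiv ℝ f (σ' t)) (deriv σ' t)) t :=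
    (hfdiff.hasFDerivAt.comp_hasDerivAt t hdiff.hasDerivAt)
  rw [hchain.deriv]
  refine ENNReal.ofReal_le_ofReal ?_
  rw [fderiv_apply_eq_inner_gradient]
  calc |inner ℝ (gradient f (σ' t)) (deriv σ' t)|
      ≤ ‖gradient f (σ' t)‖ * ‖deriv σ' t‖ := abs_real_inner_le_norm _ _
    _ = ‖gradient f (σ t)‖ * ‖deriv σ t‖ := by rw [hσ't, hderiv_eq]

lemma lintegral_Ioi_zero_eq_iSup (W : ℝ → ENNReal) (hW : Measurable W) :
    ∫⁻ t in Set.Ioi (0:ℝ), W t = ⨆ n : ℕ, ∫⁻ t in Set.Ioc (0:ℝ) (n:ℝ), W t := by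
  have h1 : ∀ n : ℕ, ∫⁻ t in Set.Ioc (0:ℝ) (n:ℝ), W t
      = ∫⁻ t, (Set.Ioc (0:ℝ) (n:ℝ)).indicator W t := fun n =>
    (lintegral_indicator measurableSet_Ioc W).symm
  have h2 : ∫⁻ t in Set.Ioi (0:ℝ), W t = ∫⁻ t, (Set.Ioi (0:ℝ)).indicator W t :=
    (lintegral_indicator measurableSet_Ioi W).symm
  rw [h2]
  simp_rw [h1]
  rw [← lintegral_iSup]
  · congr 1
    funext t
    rcases le_or_gt t 0 with ht | ht
    · have : ∀ n : ℕ, (Set.Ioc (0:ℝ) (n:ℝ)).indicator W t = 0 := fun n =>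
        Set.indicator_of_notMem (fun hmem => absurd hmem.1 (not_lt.2 ht)) _
      simp [this, Set.indicator_of_notMem (fun hmem : t ∈ Set.Ioi (0:ℝ) => absurd hmem ht.not_gt)]
    · obtain ⟨n, hn⟩ := exists_nat_ge t
      rw [Set.indicator_of_mem (Set.mem_Ioi.2 ht)]
      have hmem : t ∈ Set.Ioc (0:ℝ) (n:ℝ) := ⟨ht, hn⟩
      apply le_antisymm
      · exact le_trans (le_of_eq (Set.indicator_of_mem hmem W).symm)
          (le_iSup (fun n : ℕ => (Set.Ioc (0:ℝ) (n:ℝ)).indicator W t) n)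
      · exact iSup_le fun m => Set.indicator_apply_le (fun _ => le_rfl)
  · exact fun n => hW.indicator measurableSet_Ioc
  · intro m n hmn
    exact Set.indicator_le_indicator_of_subset
      (Set.Ioc_subset_Ioc_right (Nat.cast_le.2 hmn)) (fun _ => zero_le)

/-- The (generalized) Agmon distance from `x` to a point `x*`, with weight `|∇f|`,
defined as the infimum of weighted lengths of Lipschitz curves parametrized on the
unbounded interval `[0,∞)`, starting from `x`, staying in `Ω` and converging to `x*`.
(This class contains in particular every Lipschitz curve `[0,1] → Ω` from `x` to `x*`,
extended as a constant after time `1`.) -/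
noncomputable def agmonDistGen {d : ℕ} (Ω : Set (EuclideanSpace ℝ (Fin d)))
    (f : EuclideanSpace ℝ (Fin d) → ℝ) (xstar x : EuclideanSpace ℝ (Fin d)) : ℝ≥0∞ :=
  sInf {L : ℝ≥0∞ | ∃ γ : ℝ → EuclideanSpace ℝ (Fin d),
    (∃ C : NNReal, LipschitzOnWith C γ (Set.Ici (0:ℝ))) ∧
    (∀ t : ℝ, 0 ≤ t → γ t ∈ Ω) ∧ γ 0 = x ∧ Tendsto γ atTop (𝓝 xstar) ∧
    L = ∫⁻ t in Set.Ioi (0:ℝ), ENNReal.ofReal (‖gradient f (γ t)‖ * ‖deriv γ t‖)}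

/-- Agmon distance to a critical point along the gradient flow: if the
backward gradient flow trajectory `γ' = −∇f(γ)`, `γ(0) = x` stays in `Ω` and converges to
the critical point `x*` of `f`, then `d_a(x*, x) = f(x) − f(x*)`. -/
theorem agmonDistGen_eq_of_gradient_flow {d : ℕ}
    (Ω : Set (EuclideanSpace ℝ (Fin d))) (hΩ : IsOpen Ω)
    (f : EuclideanSpace ℝ (Fin d) → ℝ) (hf : ContDiffOn ℝ 1 f Ω)
    (xstar x : EuclideanSpace ℝ (Fin d)) (hxstar : xstar ∈ Ω)
    (hcrit : gradient f xstar = 0)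
    (γ : ℝ → EuclideanSpace ℝ (Fin d)) (hγ0 : γ 0 = x)
    (hγΩ : ∀ t : ℝ, 0 ≤ t → γ t ∈ Ω)
    (hγflow : ∀ t : ℝ, 0 ≤ t → HasDerivAt γ (-gradient f (γ t)) t)
    (hγlim : Tendsto γ atTop (𝓝 xstar)) :
    agmonDistGen Ω f xstar x = ENNReal.ofReal (f x - f xstar) := by
  have hfd : DifferentiableOn ℝ f Ω := hf.differentiableOn one_ne_zero
  have hfderiv_cont : ContinuousOn (fderiv ℝ f) Ω := hf.continuousOn_fderiv_of_isOpen hΩ le_rfl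
  have hGcont : ContinuousOn (fun y => gradient f y) Ω := by
    have h : (fun y => gradient f y)
        = fun y => (InnerProductSpace.toDual ℝ (EuclideanSpace ℝ (Fin d))).symm (fderiv ℝ f y) :=
      rfl
    rw [h]
    exact (InnerProductSpace.toDual ℝ _).symm.continuous.comp_continuousOn hfderiv_cont
  have hγcont : ContinuousOn γ (Set.Ici 0) := fun t ht =>
    (hγflow t ht).continuousAt.continuousWithinAt
  have hγmax : Continuous (fun t : ℝ => γ (max t 0)) :=
    hγcont.comp_continuous (continuous_id.max continuous_const)
      (fun t => Set.mem_Ici.2 (le_max_right t 0))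
  set q : ℝ → ℝ := fun t => ‖gradient f (γ (max t 0))‖ with hqdef
  have hq : Continuous q := (hGcont.comp_continuous hγmax (fun t => hγΩ _ (le_max_right t 0))).norm
  have hqt : ∀ t, 0 ≤ t → q t = ‖gradient f (γ t)‖ := fun t ht => by
    rw [hqdef]; simp [max_eq_left ht]
  have hmaxtop : Tendsto (fun t : ℝ => max t 0) atTop atTop :=
    tendsto_atTop_mono (fun t => le_max_left t 0) tendsto_id
  have hq0 : Tendsto q atTop (𝓝 0) := by
    have h1 : Tendsto (fun t : ℝ => γ (max t 0)) atTop (𝓝 xstar) := hγlim.comp hmaxtop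
    have h2 : Tendsto (fun t : ℝ => gradient f (γ (max t 0))) atTop (𝓝 (gradient f xstar)) :=
      ((hGcont.continuousAt (hΩ.mem_nhds hxstar)).tendsto).comp h1
    rw [hcrit] at h2
    simpa using h2.norm
  obtain ⟨T₀, hT₀⟩ := eventually_atTop.1 (hq0.eventually_lt_const (by norm_num : (0:ℝ) < 1))
  set T₁ : ℝ := max T₀ 0 with hT₁
  obtain ⟨B, hB⟩ :=
    (isCompact_Icc : IsCompact (Set.Icc (0:ℝ) T₁)).exists_bound_of_continuousOn hq.continuousOn
  set Cr : ℝ := max B 1 with hCrdef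
  have hCr1 : (1:ℝ) ≤ Cr := le_max_right _ _
  have hqC : ∀ t, q t ≤ Cr := by
    intro t
    rcases le_total t T₁ with h | h
    · rcases le_total t 0 with h0 | h0
      · have hq00 : q t = q 0 := by rw [hqdef]; simp [max_eq_right h0]
        rw [hq00]
        exact le_trans (le_trans (le_abs_self _) (hB 0 ⟨le_rfl, le_max_right _ _⟩))
          (le_max_left _ _)
      · exact le_trans (le_trans (le_abs_self _) (hB t ⟨h0, h⟩)) (le_max_left _ _)
    · exact le_trans (hT₀ t (le_trans (le_max_left _ _) h)).le hCr1
  set C : NNReal := Cr.toNNReal with hC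
  have hγlip : LipschitzOnWith C γ (Set.Ici 0) := by
    refine Convex.lipschitzOnWith_of_nnnorm_hasDerivWithin_le (convex_Ici 0)
      (fun t ht => (hγflow t ht).hasDerivWithinAt) ?_
    intro t ht
    rw [← NNReal.coe_le_coe, coe_nnnorm, hC, Real.coe_toNNReal _ (by linarith : (0:ℝ) ≤ Cr),
      norm_neg, ← hqt t ht]
    exact hqC t
  have key2 : ∀ S T : ℝ, 0 ≤ S → S ≤ T → f (γ S) - f (γ T) = ∫ s in S..T, q s * q s := by
    intro S T hS hST
    have hderiv : ∀ t ∈ Set.uIcc S T, HasDerivAt (fun s => f (γ s)) (-(q t * q t)) t := by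
      intro t ht
      rw [Set.uIcc_of_le hST] at ht
      have ht0 : 0 ≤ t := le_trans hS ht.1
      have hF : HasFDerivAt f (fderiv ℝ f (γ t)) (γ t) :=
        (hfd.differentiableAt (hΩ.mem_nhds (hγΩ t ht0))).hasFDerivAt
      have hc := hF.comp_hasDerivAt t (hγflow t ht0)
      refine hc.congr_deriv ?_
      rw [fderiv_apply_eq_inner_gradient, inner_neg_right, real_inner_self_eq_norm_mul_norm,
        hqt t ht0]
    have hint : IntervalIntegrable (fun t => -(q t * q t)) volume S T :=
      ((hq.mul hq).neg).intervalIntegrable _ _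
    have h := intervalIntegral.integral_eq_sub_of_hasDerivAt hderiv hint
    rw [intervalIntegral.integral_neg] at h
    linarith [h]
  have hanti : ∀ S T : ℝ, 0 ≤ S → S ≤ T → f (γ T) ≤ f (γ S) := by
    intro S T hS hST
    have h := key2 S T hS hST
    have hnn : 0 ≤ ∫ s in S..T, q s * q s :=
      intervalIntegral.integral_nonneg hST (fun s _ => mul_self_nonneg _)
    linarith
  have hφlim : Tendsto (fun T => f (γ T)) atTop (𝓝 (f xstar)) :=
    ((hf.continuousOn.continuousAt (hΩ.mem_nhds hxstar)).tendsto).comp hγlim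
  have hxstar_le : ∀ T, 0 ≤ T → f xstar ≤ f (γ T) := by
    intro T hT
    refine le_of_tendsto hφlim ?_
    filter_upwards [eventually_ge_atTop T] with S hS
    exact hanti T S hT hS
  set W : ℝ → ℝ≥0∞ := fun t => ENNReal.ofReal (q t * q t) with hW
  have hWmeas : Measurable W := (ENNReal.continuous_ofReal.comp (hq.mul hq)).measurable
  have hIocW : ∀ n : ℕ, ∫⁻ t in Set.Ioc (0:ℝ) (n:ℝ), W t = ENNReal.ofReal (f x - f (γ n)) := by
    intro n
    have hInt : IntegrableOn (fun t => q t * q t) (Set.Ioc (0:ℝ) (n:ℝ)) :=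
      (hq.mul hq).integrableOn_Ioc
    rw [hW]
    rw [← ofReal_integral_eq_lintegral_ofReal hInt (ae_of_all _ (fun t => mul_self_nonneg _))]
    congr 1
    rw [← intervalIntegral.integral_of_le (Nat.cast_nonneg n),
      ← key2 0 n le_rfl (Nat.cast_nonneg n), hγ0]
  have hflow_val : ∫⁻ t in Set.Ioi (0:ℝ),
      ENNReal.ofReal (‖gradient f (γ t)‖ * ‖deriv γ t‖) = ENNReal.ofReal (f x - f xstar) := by
    have hsub : ∫⁻ t in Set.Ioi (0:ℝ), ENNReal.ofReal (‖gradient f (γ t)‖ * ‖deriv γ t‖)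
        = ∫⁻ t in Set.Ioi (0:ℝ), W t := by
      refine setLIntegral_congr_fun measurableSet_Ioi ?_
      intro t ht
      have ht0 : (0:ℝ) < t := ht
      have hd : deriv γ t = -gradient f (γ t) := (hγflow t ht0.le).deriv
      simp only [hW, hd, norm_neg, hqt t ht0.le]
    rw [hsub, lintegral_Ioi_zero_eq_iSup W hWmeas]
    simp_rw [hIocW]
    apply le_antisymm
    · refine iSup_le fun n => ENNReal.ofReal_le_ofReal ?_
      have := hxstar_le (n:ℝ) (Nat.cast_nonneg n)
      linarith
    · have h1 : Tendsto (fun n : ℕ => f (γ (n:ℝ))) atTop (𝓝 (f xstar)) :=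
        hφlim.comp tendsto_natCast_atTop_atTop
      have h2 : Tendsto (fun n : ℕ => ENNReal.ofReal (f x - f (γ (n:ℝ)))) atTop
          (𝓝 (ENNReal.ofReal (f x - f xstar))) :=
        ENNReal.tendsto_ofReal (h1.const_sub (f x))
      exact le_of_tendsto h2 (Eventually.of_forall fun n => le_iSup (fun n : ℕ => ENNReal.ofReal (f x - f (γ (n:ℝ)))) n)
  rw [agmonDistGen]
  apply le_antisymm
  · exact le_trans (sInf_le ⟨γ, ⟨C, hγlip⟩, hγΩ, hγ0, hγlim, rfl⟩) (le_of_eq hflow_val)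
  · refine le_sInf ?_
    rintro L ⟨σ, ⟨C', hσlip⟩, hσΩ, hσ0, hσlim, rfl⟩
    have hσn : ∀ n : ℕ, ENNReal.ofReal (f x - f (σ (n:ℝ)))
        ≤ ∫⁻ t in Set.Ioi (0:ℝ), ENNReal.ofReal (‖gradient f (σ t)‖ * ‖deriv σ t‖) := by
      intro n
      have h1 := lower_core Ω hΩ f hf σ C' hσlip (fun t ht => hσΩ t ht) (Nat.cast_nonneg n)
      rw [hσ0] at h1
      exact le_trans h1 (lintegral_mono_set Set.Ioc_subset_Ioi_self)
    have h1 : Tendsto (fun n : ℕ => f (σ (n:ℝ))) atTop (𝓝 (f xstar)) :=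
      (((hf.continuousOn.continuousAt (hΩ.mem_nhds hxstar)).tendsto).comp hσlim).comp
        tendsto_natCast_atTop_atTop
    have h2 : Tendsto (fun n : ℕ => ENNReal.ofReal (f x - f (σ (n:ℝ)))) atTop
        (𝓝 (ENNReal.ofReal (f x - f xstar))) := ENNReal.tendsto_ofReal (h1.const_sub (f x))
    exact le_of_tendsto h2 (Eventually.of_forall hσn)
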